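/- Let H be an infinite-dimensional separable complex Hilbert space, let p ∈ (1,∞] and q ∈ [1,∞) be conjugate exponents, let C ∈ B^p(H), and let (e_n) be any orthonormal system in H. Then (1/n^{1/q}) Σ_{k=1}^n ⟨e_k, C e_k⟩ → 0 as n → ∞. -/

import Mathlib

open scoped ComplexInnerProductSpace ENNReal
open Filter Topology

noncomputable section

universe u v

noncomputable def sv {X : Type u} {Y : Type v} [NormedAddCommGroup X] [InnerProductSpace ℂ X]
    [NormedAddCommGroup Y] [InnerProductSpace ℂ Y] (C : X →L[ℂ] Y) (n : ℕ) : ℝ :=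
  ⨅ F : {F : X →L[ℂ] Y // Module.rank ℂ (LinearMap.range (F : X →ₗ[ℂ] Y)) ≤ n},
    ‖C - (F : X →L[ℂ] Y)‖

def MemSchatten {X : Type u} {Y : Type v} [NormedAddCommGroup X] [InnerProductSpace ℂ X]
    [NormedAddCommGroup Y] [InnerProductSpace ℂ Y] (p : ℝ≥0∞) (C : X →L[ℂ] Y) : Prop :=
  IsCompactOperator C ∧ (p ≠ ∞ → Summable (fun n => sv C n ^ p.toReal))

noncomputable def schattenNorm {X : Type u} {Y : Type v} [NormedAddCommGroup X]
    [InnerProductSpace ℂ X] [NormedAddCommGroup Y] [InnerProductSpace ℂ Y]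
    (p : ℝ≥0∞) (C : X →L[ℂ] Y) : ℝ :=
  if p = ∞ then ‖C‖ else (∑' n, sv C n ^ p.toReal) ^ (1 / p.toReal)

def IsTraceOf {Y : Type v} [NormedAddCommGroup Y] [InnerProductSpace ℂ Y] [CompleteSpace Y]
    (A : Y →L[ℂ] Y) (z : ℂ) : Prop :=
  ∀ (ι : Type v) (b : HilbertBasis ι ℂ Y), HasSum (fun i => ⟪b i, A (b i)⟫) z

set_option linter.unusedSectionVars false

variable {X : Type u} {Y : Type v} [NormedAddCommGroup X] [InnerProductSpace ℂ X]
    [NormedAddCommGroup Y] [InnerProductSpace ℂ Y] (C : X →L[ℂ] Y)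

lemma sv_idx_nonempty (n : ℕ) :
    Nonempty {F : X →L[ℂ] Y // Module.rank ℂ (LinearMap.range (F : X →ₗ[ℂ] Y)) ≤ n} :=
  ⟨⟨0, by simp⟩⟩

lemma sv_nonneg (n : ℕ) : 0 ≤ sv C n := by
  have := sv_idx_nonempty (X := X) (Y := Y) n
  exact le_ciInf fun F => norm_nonneg _

lemma sv_bddBelow (n : ℕ) : BddBelow (Set.range fun F : {F : X →L[ℂ] Y //
    Module.rank ℂ (LinearMap.range (F : X →ₗ[ℂ] Y)) ≤ n} => ‖C - (F : X →L[ℂ] Y)‖) :=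
  ⟨0, by rintro x ⟨F, rfl⟩; exact norm_nonneg _⟩

lemma sv_le (n : ℕ) (F : X →L[ℂ] Y)
    (hF : Module.rank ℂ (LinearMap.range (F : X →ₗ[ℂ] Y)) ≤ n) : sv C n ≤ ‖C - F‖ :=
  ciInf_le (sv_bddBelow C n) ⟨F, hF⟩

lemma sv_antitone : Antitone (sv C) := by
  intro m n hmn
  have := sv_idx_nonempty (X := X) (Y := Y) m
  refine le_ciInf fun F => sv_le C n F.1 (F.2.trans ?_)
  exact_mod_cast Nat.cast_le.2 hmn

lemma sv_exists (n : ℕ) {ε : ℝ} (hε : 0 < ε) :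
    ∃ F : X →L[ℂ] Y, Module.rank ℂ (LinearMap.range (F : X →ₗ[ℂ] Y)) ≤ n ∧
      ‖C - F‖ < sv C n + ε := by
  have := sv_idx_nonempty (X := X) (Y := Y) n
  have h : sv C n < sv C n + ε := lt_add_of_pos_right _ hε
  obtain ⟨F, hF⟩ := exists_lt_of_ciInf_lt h
  exact ⟨F.1, F.2, hF⟩

lemma sv_le_norm (n : ℕ) : sv C n ≤ ‖C‖ := by
  simpa using sv_le C n 0 (by simp)

variable {H : Type u} [NormedAddCommGroup H] [InnerProductSpace ℂ H] [CompleteSpace H]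

lemma diag_sum_le (A : H →L[ℂ] H) {e : ℕ → H} (he : Orthonormal ℂ e) (n : ℕ) :
    ‖∑ k ∈ Finset.range n, (⟪e k, A (e k)⟫ : ℂ)‖ ≤ n * ‖A‖ := by
  calc ‖∑ k ∈ Finset.range n, (⟪e k, A (e k)⟫ : ℂ)‖
      ≤ ∑ k ∈ Finset.range n, ‖(⟪e k, A (e k)⟫ : ℂ)‖ := norm_sum_le _ _
    _ ≤ ∑ _k ∈ Finset.range n, ‖A‖ := by
        refine Finset.sum_le_sum fun k _ => ?_
        have h1 : ‖e k‖ = 1 := he.1 k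
        calc ‖(⟪e k, A (e k)⟫ : ℂ)‖ ≤ ‖e k‖ * ‖A (e k)‖ := norm_inner_le_norm _ _
          _ ≤ 1 * (‖A‖ * ‖e k‖) := by
              rw [h1, one_mul]; simpa [h1] using A.le_opNorm (e k)
          _ = ‖A‖ := by rw [h1]; ring
    _ = n * ‖A‖ := by simp [Finset.sum_const, Finset.card_range]

lemma trace_bound {m : ℕ} (F : H →L[ℂ] H)
    (hF : Module.rank ℂ (LinearMap.range (F : H →ₗ[ℂ] H)) ≤ (m : Cardinal))
    {e : ℕ → H} (he : Orthonormal ℂ e) (n : ℕ) :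
    ‖∑ k ∈ Finset.range n, (⟪e k, F (e k)⟫ : ℂ)‖ ≤ m * ‖F‖ := by
  set V := LinearMap.range (F : H →ₗ[ℂ] H) with hV
  haveI : Module.Finite ℂ V :=
    Module.rank_lt_aleph0_iff.mp (lt_of_le_of_lt hF (Cardinal.nat_lt_aleph0 m))
  have hd : Module.finrank ℂ V ≤ m := Module.finrank_le_of_rank_le hF
  let b := stdOrthonormalBasis ℂ V
  have hexp : ∀ x : H, F x = ∑ j, (⟪((b j : V) : H), F x⟫ : ℂ) • ((b j : V) : H) := by
    intro x
    have hmem : F x ∈ V := LinearMap.mem_range_self _ x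
    have h := b.sum_repr' ⟨F x, hmem⟩
    have h2 := congrArg (Submodule.subtype V) h
    simp only [map_sum, map_smul, Submodule.subtype_apply, Submodule.coe_inner] at h2
    exact h2.symm
  have key : ∑ k ∈ Finset.range n, (⟪e k, F (e k)⟫ : ℂ) =
      ∑ j, ∑ k ∈ Finset.range n,
        (⟪((b j : V) : H), F (e k)⟫ : ℂ) * (⟪e k, ((b j : V) : H)⟫ : ℂ) := by
    rw [Finset.sum_comm]
    refine Finset.sum_congr rfl fun k _ => ?_
    conv_lhs => rw [hexp (e k)]
    rw [inner_sum]
    exact Finset.sum_congr rfl fun j _ => by rw [inner_smul_right]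
  rw [key]
  calc ‖∑ j, ∑ k ∈ Finset.range n,
        (⟪((b j : V) : H), F (e k)⟫ : ℂ) * (⟪e k, ((b j : V) : H)⟫ : ℂ)‖
      ≤ ∑ j, ‖∑ k ∈ Finset.range n,
        (⟪((b j : V) : H), F (e k)⟫ : ℂ) * (⟪e k, ((b j : V) : H)⟫ : ℂ)‖ := norm_sum_le _ _
    _ ≤ ∑ _j : Fin (Module.finrank ℂ V), ‖F‖ := by
        refine Finset.sum_le_sum fun j _ => ?_
        set u := ContinuousLinearMap.adjoint F ((b j : V) : H) with hu
        have hbj : ‖((b j : V) : H)‖ = 1 := by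
          have := b.orthonormal.1 j
          exact this
        have hnu : ‖u‖ ≤ ‖F‖ := by
          have := (ContinuousLinearMap.adjoint F).le_opNorm ((b j : V) : H)
          rw [hbj, mul_one] at this
          rw [LinearIsometryEquiv.norm_map ContinuousLinearMap.adjoint F] at this
          exact this
        have step1 : ‖∑ k ∈ Finset.range n,
            (⟪((b j : V) : H), F (e k)⟫ : ℂ) * (⟪e k, ((b j : V) : H)⟫ : ℂ)‖
            ≤ ∑ k ∈ Finset.range n,
              ‖(⟪u, e k⟫ : ℂ)‖ * ‖(⟪((b j : V) : H), e k⟫ : ℂ)‖ := by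
          refine (norm_sum_le _ _).trans (Finset.sum_le_sum fun k _ => ?_)
          rw [norm_mul]
          have h1 : (⟪((b j : V) : H), F (e k)⟫ : ℂ) = ⟪u, e k⟫ :=
            (ContinuousLinearMap.adjoint_inner_left F (e k) _).symm
          have h2 : ‖(⟪e k, ((b j : V) : H)⟫ : ℂ)‖ = ‖(⟪((b j : V) : H), e k⟫ : ℂ)‖ :=
            norm_inner_symm _ _
          rw [h1, h2]
        have cs := Finset.sum_mul_sq_le_sq_mul_sq (Finset.range n)
          (fun k => ‖(⟪u, e k⟫ : ℂ)‖) (fun k => ‖(⟪((b j : V) : H), e k⟫ : ℂ)‖)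
        have b1 : ∑ k ∈ Finset.range n, ‖(⟪u, e k⟫ : ℂ)‖ ^ 2 ≤ ‖u‖ ^ 2 := by
          have := he.sum_inner_products_le (𝕜 := ℂ) (x := u) (s := Finset.range n)
          calc ∑ k ∈ Finset.range n, ‖(⟪u, e k⟫ : ℂ)‖ ^ 2
              = ∑ k ∈ Finset.range n, ‖(⟪e k, u⟫ : ℂ)‖ ^ 2 := by
                refine Finset.sum_congr rfl fun k _ => by rw [norm_inner_symm]
            _ ≤ ‖u‖ ^ 2 := this
        have b2 : ∑ k ∈ Finset.range n, ‖(⟪((b j : V) : H), e k⟫ : ℂ)‖ ^ 2 ≤ 1 := by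
          have := he.sum_inner_products_le (𝕜 := ℂ) (x := ((b j : V) : H)) (s := Finset.range n)
          calc ∑ k ∈ Finset.range n, ‖(⟪((b j : V) : H), e k⟫ : ℂ)‖ ^ 2
              = ∑ k ∈ Finset.range n, ‖(⟪e k, ((b j : V) : H)⟫ : ℂ)‖ ^ 2 := by
                refine Finset.sum_congr rfl fun k _ => by rw [norm_inner_symm]
            _ ≤ ‖((b j : V) : H)‖ ^ 2 := this
            _ = 1 := by rw [hbj]; norm_num
        have hsum_nonneg : (0:ℝ) ≤ ∑ k ∈ Finset.range n,
            ‖(⟪u, e k⟫ : ℂ)‖ * ‖(⟪((b j : V) : H), e k⟫ : ℂ)‖ :=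
          Finset.sum_nonneg fun k _ => mul_nonneg (norm_nonneg _) (norm_nonneg _)
        have hfinal : ∑ k ∈ Finset.range n,
            ‖(⟪u, e k⟫ : ℂ)‖ * ‖(⟪((b j : V) : H), e k⟫ : ℂ)‖ ≤ ‖F‖ := by
          have hsq : (∑ k ∈ Finset.range n,
              ‖(⟪u, e k⟫ : ℂ)‖ * ‖(⟪((b j : V) : H), e k⟫ : ℂ)‖) ^ 2 ≤ ‖F‖ ^ 2 := by
            refine cs.trans ?_
            calc (∑ k ∈ Finset.range n, ‖(⟪u, e k⟫ : ℂ)‖ ^ 2) *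
                ∑ k ∈ Finset.range n, ‖(⟪((b j : V) : H), e k⟫ : ℂ)‖ ^ 2
                ≤ ‖u‖ ^ 2 * 1 := by
                  refine mul_le_mul b1 b2 (Finset.sum_nonneg fun k _ => sq_nonneg _)
                    (sq_nonneg _)
              _ = ‖u‖ ^ 2 := mul_one _
              _ ≤ ‖F‖ ^ 2 := pow_le_pow_left₀ (norm_nonneg _) hnu 2
          nlinarith [hsq, hsum_nonneg, norm_nonneg F]
        exact step1.trans hfinal
    _ = (Module.finrank ℂ V : ℝ) * ‖F‖ := by simp [Finset.sum_const]
    _ ≤ m * ‖F‖ := by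
        have : (Module.finrank ℂ V : ℝ) ≤ m := by exact_mod_cast hd
        exact mul_le_mul_of_nonneg_right this (norm_nonneg _)
lemma exists_finiteRank_approx (C : H →L[ℂ] H) (hC : IsCompactOperator C)
    {ε : ℝ} (hε : 0 < ε) :
    ∃ (N : ℕ) (F : H →L[ℂ] H),
      Module.rank ℂ (LinearMap.range (F : H →ₗ[ℂ] H)) ≤ (N : Cardinal) ∧ ‖C - F‖ < ε := by
  have hε3 : 0 < ε / 3 := by linarith
  have hK : IsCompact (closure (C '' Metric.ball 0 1)) := by
    have := hC.isCompact_closure_image_ball (𝕜₁ := ℂ) (f := (C : H →ₗ[ℂ] H)) 1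
    simpa using this
  obtain ⟨t, htf, hcover⟩ := (Metric.totallyBounded_iff).1 hK.totallyBounded (ε/3) hε3
  set V := Submodule.span ℂ t with hVdef
  haveI : FiniteDimensional ℂ V := FiniteDimensional.span_of_finite ℂ htf
  set P := V.orthogonalProjectionOnto with hP
  set F : H →L[ℂ] H := V.subtypeL.comp (P.comp C) with hFdef
  refine ⟨Module.finrank ℂ V, F, ?_, ?_⟩
  · have hle : LinearMap.range (F : H →ₗ[ℂ] H) ≤ V := by
      rintro y ⟨x, rfl⟩
      exact Submodule.coe_mem _
    calc Module.rank ℂ (LinearMap.range (F : H →ₗ[ℂ] H)) ≤ Module.rank ℂ V :=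
          Submodule.rank_mono hle
      _ = (Module.finrank ℂ V : Cardinal) := (Module.finrank_eq_rank ℂ V).symm
  · -- norm bound
    have hball : ∀ x : H, ‖x‖ < 1 → ‖(C - F) x‖ ≤ ε / 3 := by
      intro x hx
      have hmem : C x ∈ closure (C '' Metric.ball 0 1) :=
        subset_closure ⟨x, by simpa using hx, rfl⟩
      obtain ⟨y, hyt, hy⟩ := by
        have := hcover hmem
        simpa using this
      have hyV : y ∈ V := Submodule.subset_span hyt
      have hmin : ‖C x - (P (C x) : H)‖ ≤ ‖C x - y‖ := by
        rw [show (P (C x) : H) = V.starProjection (C x) from rfl, Submodule.starProjection_minimal]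
        have : Nonempty V := ⟨0⟩
        exact ciInf_le ⟨0, by rintro r ⟨v, rfl⟩; exact norm_nonneg _⟩ (⟨y, hyV⟩ : V)
      have hFx : F x = (P (C x) : H) := rfl
      rw [ContinuousLinearMap.sub_apply, hFx]
      exact hmin.trans (le_of_lt (by simpa [dist_eq_norm] using hy))
    have hop : ‖C - F‖ ≤ 2 * (ε / 3) := by
      refine ContinuousLinearMap.opNorm_le_bound _ (by linarith) fun x => ?_
      rcases eq_or_ne x 0 with rfl | hx0
      · simp
      · have hxn : (0:ℝ) < ‖x‖ := norm_pos_iff.2 hx0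
        set c : ℂ := ((2 * ‖x‖ : ℝ) : ℂ) with hc
        have h2x : (2 * ‖x‖ : ℝ) ≠ 0 := by positivity
        have hcne : c ≠ 0 := by
          rw [hc]; exact Complex.ofReal_ne_zero.mpr h2x
        have hz : ‖c⁻¹ • x‖ < 1 := by
          rw [norm_smul, norm_inv]
          have : ‖c‖ = 2 * ‖x‖ := by
            rw [hc, Complex.norm_real, Real.norm_eq_abs, abs_of_pos (by positivity)]
          rw [this]
          rw [inv_mul_lt_iff₀ (by positivity)]
          linarith
        have hb := hball (c⁻¹ • x) hz
        have hxeq : x = c • (c⁻¹ • x) := by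
          rw [smul_smul, mul_inv_cancel₀ hcne, one_smul]
        calc ‖(C - F) x‖ = ‖(C - F) (c • (c⁻¹ • x))‖ := by rw [← hxeq]
          _ = ‖c‖ * ‖(C - F) (c⁻¹ • x)‖ := by rw [map_smul, norm_smul]
          _ ≤ ‖c‖ * (ε / 3) := by
              refine mul_le_mul_of_nonneg_left hb (norm_nonneg _)
          _ = 2 * ‖x‖ * (ε / 3) := by
              rw [hc, Complex.norm_real, Real.norm_eq_abs, abs_of_pos (by positivity)]
          _ = 2 * (ε / 3) * ‖x‖ := by ring
    calc ‖C - F‖ ≤ 2 * (ε / 3) := hop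
      _ < ε := by linarith

lemma dyadic_sum {a : ℕ → ℝ} (ha : Antitone a) (L : ℕ) :
    ∑ j ∈ Finset.range (L+1), (2^j : ℝ) * a (2^j) ≤
      a 1 + 2 * ∑ k ∈ Finset.Ico 1 (2^L), a k := by
  induction L with
  | zero => simp
  | succ L ih =>
    rw [Finset.sum_range_succ]
    have hcard : (Finset.Ico (2^L) (2^(L+1))).card = 2^L := by
      rw [Nat.card_Ico, pow_succ]; omega
    have h1 : (2^(L+1) : ℝ) * a (2^(L+1)) ≤ 2 * ∑ k ∈ Finset.Ico (2^L) (2^(L+1)), a k := by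
      have hle : ∀ k ∈ Finset.Ico (2^L) (2^(L+1)), a (2^(L+1)) ≤ a k := fun k hk =>
        ha (le_of_lt (Finset.mem_Ico.1 hk).2)
      have := Finset.card_nsmul_le_sum (Finset.Ico (2^L) (2^(L+1))) a (a (2^(L+1))) hle
      rw [hcard, nsmul_eq_mul] at this
      have h2 : (2^(L+1) : ℝ) * a (2^(L+1)) = 2 * ((2^L : ℕ) * a (2^(L+1))) := by
        push_cast; ring
      rw [h2]
      linarith
    have hsplit : Finset.Ico 1 (2^(L+1)) = Finset.Ico 1 (2^L) ∪ Finset.Ico (2^L) (2^(L+1)) := by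
      rw [Finset.Ico_union_Ico_eq_Ico Nat.one_le_two_pow
        (Nat.pow_le_pow_right (by norm_num) (Nat.le_succ L))]
    have hdisj : Disjoint (Finset.Ico 1 (2^L)) (Finset.Ico (2^L) (2^(L+1))) :=
      Finset.Ico_disjoint_Ico_consecutive 1 (2^L) (2^(L+1))
    rw [hsplit, Finset.sum_union hdisj]
    linarith

lemma sv_tendsto_zero (C : H →L[ℂ] H) (hcpt : IsCompactOperator C) :
    Filter.Tendsto (sv C) Filter.atTop (𝓝 0) := by
  rw [Metric.tendsto_atTop]
  intro ε hε
  obtain ⟨N, F, hrank, hnorm⟩ := exists_finiteRank_approx C hcpt hε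
  refine ⟨N, fun n hn => ?_⟩
  rw [Real.dist_eq, sub_zero, abs_of_nonneg (sv_nonneg C n)]
  calc sv C n ≤ sv C N := sv_antitone C hn
    _ ≤ ‖C - F‖ := sv_le C N F hrank
    _ < ε := hnorm

lemma rank_sub_le (A B : H →L[ℂ] H) {a b : ℕ}
    (hA : Module.rank ℂ (LinearMap.range (A : H →ₗ[ℂ] H)) ≤ (a : Cardinal))
    (hB : Module.rank ℂ (LinearMap.range (B : H →ₗ[ℂ] H)) ≤ (b : Cardinal)) :
    Module.rank ℂ (LinearMap.range ((A - B : H →L[ℂ] H) : H →ₗ[ℂ] H)) ≤ ((a + b : ℕ) : Cardinal) := by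
  have hcoe : ((A - B : H →L[ℂ] H) : H →ₗ[ℂ] H) = (A : H →ₗ[ℂ] H) + (-(B : H →ₗ[ℂ] H)) := by
    rw [ContinuousLinearMap.coe_sub, sub_eq_add_neg]
  rw [hcoe]
  have h1 := LinearMap.rank_add_le (A : H →ₗ[ℂ] H) (-(B : H →ₗ[ℂ] H))
  have h2 : LinearMap.rank (-(B : H →ₗ[ℂ] H)) = LinearMap.rank (B : H →ₗ[ℂ] H) := by
    unfold LinearMap.rank
    rw [LinearMap.range_neg]
  calc Module.rank ℂ (LinearMap.range ((A : H →ₗ[ℂ] H) + (-(B : H →ₗ[ℂ] H)))) =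
        LinearMap.rank ((A : H →ₗ[ℂ] H) + (-(B : H →ₗ[ℂ] H))) := rfl
    _ ≤ LinearMap.rank (A : H →ₗ[ℂ] H) + LinearMap.rank (-(B : H →ₗ[ℂ] H)) := h1
    _ = LinearMap.rank (A : H →ₗ[ℂ] H) + LinearMap.rank (B : H →ₗ[ℂ] H) := by rw [h2]
    _ ≤ (a : Cardinal) + (b : Cardinal) := add_le_add hA hB
    _ = ((a + b : ℕ) : Cardinal) := by push_cast; rfl

lemma key_bound (C : H →L[ℂ] H) {e : ℕ → H} (he : Orthonormal ℂ e) :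
    ∀ n, 2 ≤ n →
      ‖∑ k ∈ Finset.range n, (⟪e k, C (e k)⟫ : ℂ)‖ ≤
        (10 * ‖C‖ + 18) + 17 * ∑ k ∈ Finset.range n, sv C k := by
  have hGex : ∀ m : ℕ, ∃ F : H →L[ℂ] H,
      Module.rank ℂ (LinearMap.range (F : H →ₗ[ℂ] H)) ≤ (m : Cardinal) ∧
      ‖C - F‖ < sv C m + 1/((m:ℝ)+1)^2 := fun m => sv_exists C m (by positivity)
  choose G hGrank hGnorm using hGex
  intro n hn
  set M := Nat.clog 2 n with hM
  have hn2M : n ≤ 2 ^ M := Nat.le_pow_clog one_lt_two n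
  have hM1 : 1 ≤ M := Nat.clog_pos one_lt_two hn
  have hMn : 2 ^ (M - 1) < n := Nat.pow_pred_clog_lt_self one_lt_two (by omega)
  -- telescoping
  have htel : G (2^M) = G 1 + ∑ j ∈ Finset.range M, (G (2^(j+1)) - G (2^j)) := by
    rw [Finset.sum_range_sub (fun j => G (2^j))]
    simp
  have hopeq : C = (C - G (2^M)) + G 1 + ∑ j ∈ Finset.range M, (G (2^(j+1)) - G (2^j)) := by
    rw [add_assoc, ← htel]; abel
  have hsplit : ∑ k ∈ Finset.range n, (⟪e k, C (e k)⟫ : ℂ)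
      = ∑ k ∈ Finset.range n, (⟪e k, (C - G (2^M)) (e k)⟫ : ℂ)
        + ∑ k ∈ Finset.range n, (⟪e k, G 1 (e k)⟫ : ℂ)
        + ∑ j ∈ Finset.range M, ∑ k ∈ Finset.range n,
            (⟪e k, (G (2^(j+1)) - G (2^j)) (e k)⟫ : ℂ) := by
    have hterm : ∀ k, (⟪e k, C (e k)⟫ : ℂ)
        = (⟪e k, (C - G (2^M)) (e k)⟫ : ℂ) + (⟪e k, G 1 (e k)⟫ : ℂ)
          + ∑ j ∈ Finset.range M, (⟪e k, (G (2^(j+1)) - G (2^j)) (e k)⟫ : ℂ) := by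
      intro k
      conv_lhs => rw [hopeq]
      rw [ContinuousLinearMap.add_apply, ContinuousLinearMap.add_apply, inner_add_right,
        inner_add_right, ContinuousLinearMap.sum_apply, inner_sum]
    calc ∑ k ∈ Finset.range n, (⟪e k, C (e k)⟫ : ℂ)
        = ∑ k ∈ Finset.range n, ((⟪e k, (C - G (2^M)) (e k)⟫ : ℂ)
            + (⟪e k, G 1 (e k)⟫ : ℂ)
            + ∑ j ∈ Finset.range M, (⟪e k, (G (2^(j+1)) - G (2^j)) (e k)⟫ : ℂ)) :=
          Finset.sum_congr rfl fun k _ => hterm k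
      _ = _ := by
          rw [Finset.sum_add_distrib, Finset.sum_add_distrib, Finset.sum_comm]
  rw [hsplit]
  -- bound the three pieces
  have hA : ‖∑ k ∈ Finset.range n, (⟪e k, (C - G (2^M)) (e k)⟫ : ℂ)‖ ≤
      (∑ k ∈ Finset.range n, sv C k) + 1 := by
    refine (diag_sum_le (C - G (2^M)) he n).trans ?_
    have h1 : ‖C - G (2^M)‖ ≤ sv C (2^M) + 1/((2:ℝ)^M+1)^2 := by
      have := (hGnorm (2^M)).le; push_cast at this ⊢; convert this using 3
    have h2 : (n:ℝ) * ‖C - G (2^M)‖ ≤ (n:ℝ) * sv C (2^M) + (n:ℝ) * (1/((2:ℝ)^M+1)^2) := by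
      have := mul_le_mul_of_nonneg_left h1 (by positivity : (0:ℝ) ≤ (n:ℝ))
      linarith [this]
    refine h2.trans (add_le_add ?_ ?_)
    · -- n * sv C (2^M) ≤ n * sv C n ≤ ∑ sv
      have hs1 : sv C (2^M) ≤ sv C n := sv_antitone C hn2M
      have hs2 : ∀ k ∈ Finset.range n, sv C n ≤ sv C k := fun k hk =>
        sv_antitone C (le_of_lt (Finset.mem_range.1 hk))
      have := Finset.card_nsmul_le_sum (Finset.range n) (sv C) (sv C n) hs2
      rw [Finset.card_range, nsmul_eq_mul] at this
      calc (n:ℝ) * sv C (2^M) ≤ (n:ℝ) * sv C n :=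
            mul_le_mul_of_nonneg_left hs1 (by positivity)
        _ ≤ ∑ k ∈ Finset.range n, sv C k := this
    · -- n / (2^M+1)^2 ≤ 1
      have hn1 : (1:ℝ) ≤ (n:ℝ) := by exact_mod_cast le_trans (by norm_num) hn
      have hD : (n:ℝ) ≤ ((2:ℝ)^M+1)^2 := by
        have h2M : (n:ℝ) ≤ (2:ℝ)^M := by exact_mod_cast hn2M
        nlinarith [h2M]
      rw [mul_one_div]
      exact div_le_one_of_le₀ hD (by positivity)
  have hB : ‖∑ k ∈ Finset.range n, (⟪e k, G 1 (e k)⟫ : ℂ)‖ ≤ 2 * ‖C‖ + 1 := by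
    refine (trace_bound (G 1) (by exact_mod_cast hGrank 1) he n).trans ?_
    have h1 : ‖G 1‖ ≤ ‖C‖ + ‖C - G 1‖ := by
      have h := norm_sub_le C (C - G 1)
      simpa [sub_sub_cancel] using h
    have h2 : ‖C - G 1‖ ≤ sv C 1 + 1/((1:ℝ)+1)^2 := by
      have := (hGnorm 1).le
      simpa using this
    have h3 : sv C 1 ≤ ‖C‖ := sv_le_norm C 1
    have : (1:ℝ) * ‖G 1‖ = ‖G 1‖ := one_mul _
    rw [Nat.cast_one, this]
    nlinarith [h1, h2, h3]
  have hCsum : ‖∑ j ∈ Finset.range M, ∑ k ∈ Finset.range n,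
      (⟪e k, (G (2^(j+1)) - G (2^j)) (e k)⟫ : ℂ)‖ ≤
      8 * ‖C‖ + 16 * (∑ k ∈ Finset.range n, sv C k) + 16 := by
    have hj : ∀ j ∈ Finset.range M, ‖∑ k ∈ Finset.range n,
        (⟪e k, (G (2^(j+1)) - G (2^j)) (e k)⟫ : ℂ)‖ ≤
        8 * ((2^j : ℝ) * sv C (2^j)) + 8 * ((1/2 : ℝ))^j := by
      intro j _
      have hrank : Module.rank ℂ (LinearMap.range
          ((G (2^(j+1)) - G (2^j) : H →L[ℂ] H) : H →ₗ[ℂ] H)) ≤ ((2^(j+2) : ℕ) : Cardinal) := by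
        have := rank_sub_le (G (2^(j+1))) (G (2^j)) (hGrank (2^(j+1))) (hGrank (2^j))
        refine this.trans ?_
        have : (2^(j+1) + 2^j : ℕ) ≤ 2^(j+2) := by ring_nf; omega
        exact_mod_cast Nat.cast_le.2 this
      have hNorm : ‖G (2^(j+1)) - G (2^j)‖ ≤ 2 * sv C (2^j) + 2 * ((1/4:ℝ))^j := by
        have heq : G (2^(j+1)) - G (2^j) = (C - G (2^j)) - (C - G (2^(j+1))) := by abel
        have h1 : ‖G (2^(j+1)) - G (2^j)‖ ≤ ‖C - G (2^j)‖ + ‖C - G (2^(j+1))‖ := by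
          rw [heq]; exact norm_sub_le _ _
        have h2 : ‖C - G (2^j)‖ ≤ sv C (2^j) + 1/((2:ℝ)^j+1)^2 := by
          have := (hGnorm (2^j)).le; push_cast at this; convert this using 3
        have h3 : ‖C - G (2^(j+1))‖ ≤ sv C (2^(j+1)) + 1/((2:ℝ)^(j+1)+1)^2 := by
          have := (hGnorm (2^(j+1))).le; push_cast at this; convert this using 3
        have h4 : sv C (2^(j+1)) ≤ sv C (2^j) :=
          sv_antitone C (Nat.pow_le_pow_right (by norm_num) (Nat.le_succ j))
        have h4j : ((4:ℝ))^j = ((2:ℝ)^j)^2 := by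
          rw [← pow_mul, mul_comm, pow_mul]; norm_num
        have h5 : 1/((2:ℝ)^j+1)^2 ≤ ((1/4:ℝ))^j := by
          rw [div_pow, one_pow, one_div, one_div]
          refine inv_anti₀ (by positivity) ?_
          nlinarith [pow_pos (by norm_num : (0:ℝ) < 2) j, h4j]
        have h6 : 1/((2:ℝ)^(j+1)+1)^2 ≤ ((1/4:ℝ))^j := by
          refine le_trans ?_ h5
          rw [one_div, one_div]
          refine inv_anti₀ (by positivity) ?_
          have hle : ((2:ℝ)^j : ℝ) ≤ (2:ℝ)^(j+1) :=
            pow_le_pow_right₀ (by norm_num) (Nat.le_succ j)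
          nlinarith [hle, pow_pos (by norm_num : (0:ℝ) < 2) j]
        linarith
      have := (trace_bound (G (2^(j+1)) - G (2^j)) hrank he n)
      refine this.trans ?_
      have hc : ((2^(j+2) : ℕ) : ℝ) = 4 * (2:ℝ)^j := by push_cast; ring
      rw [hc]
      have h8 : 4 * (2:ℝ)^j * (2 * sv C (2^j) + 2 * ((1/4:ℝ))^j) =
          8 * ((2:ℝ)^j * sv C (2^j)) + 8 * ((2:ℝ)^j * ((1/4:ℝ))^j) := by ring
      have h9 : ((2:ℝ)^j * ((1/4:ℝ))^j) = ((1/2:ℝ))^j := by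
        rw [← mul_pow]; norm_num
      calc 4 * (2:ℝ)^j * ‖G (2^(j+1)) - G (2^j)‖
          ≤ 4 * (2:ℝ)^j * (2 * sv C (2^j) + 2 * ((1/4:ℝ))^j) := by
            refine mul_le_mul_of_nonneg_left hNorm (by positivity)
        _ = 8 * ((2:ℝ)^j * sv C (2^j)) + 8 * ((1/2:ℝ))^j := by rw [h8, h9]
    calc ‖∑ j ∈ Finset.range M, ∑ k ∈ Finset.range n,
        (⟪e k, (G (2^(j+1)) - G (2^j)) (e k)⟫ : ℂ)‖
        ≤ ∑ j ∈ Finset.range M, ‖∑ k ∈ Finset.range n,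
            (⟪e k, (G (2^(j+1)) - G (2^j)) (e k)⟫ : ℂ)‖ := norm_sum_le _ _
      _ ≤ ∑ j ∈ Finset.range M, (8 * ((2^j : ℝ) * sv C (2^j)) + 8 * ((1/2 : ℝ))^j) :=
          Finset.sum_le_sum hj
      _ = 8 * (∑ j ∈ Finset.range M, (2^j : ℝ) * sv C (2^j))
          + 8 * ∑ j ∈ Finset.range M, ((1/2 : ℝ))^j := by
          rw [Finset.sum_add_distrib, ← Finset.mul_sum, ← Finset.mul_sum]
      _ ≤ 8 * (sv C 1 + 2 * ∑ k ∈ Finset.Ico 1 (2^(M-1)), sv C k) + 8 * 2 := by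
          refine add_le_add ?_ ?_
          · refine mul_le_mul_of_nonneg_left ?_ (by norm_num)
            have := dyadic_sum (sv_antitone C) (M-1)
            have hM' : M - 1 + 1 = M := by omega
            rw [hM'] at this
            exact this
          · exact mul_le_mul_of_nonneg_left (sum_geometric_two_le M) (by norm_num)
      _ ≤ 8 * (‖C‖ + 2 * ∑ k ∈ Finset.range n, sv C k) + 16 := by
          have hsub : Finset.Ico 1 (2^(M-1)) ⊆ Finset.range n := by
            intro k hk
            rw [Finset.mem_range]
            have := (Finset.mem_Ico.1 hk).2
            omega
          have hmono : ∑ k ∈ Finset.Ico 1 (2^(M-1)), sv C k ≤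
              ∑ k ∈ Finset.range n, sv C k :=
            Finset.sum_le_sum_of_subset_of_nonneg hsub fun k _ _ => sv_nonneg C k
          have := sv_le_norm C 1
          nlinarith [hmono, this]
      _ = 8 * ‖C‖ + 16 * (∑ k ∈ Finset.range n, sv C k) + 16 := by ring
  calc ‖∑ k ∈ Finset.range n, (⟪e k, (C - G (2^M)) (e k)⟫ : ℂ)
        + ∑ k ∈ Finset.range n, (⟪e k, G 1 (e k)⟫ : ℂ)
        + ∑ j ∈ Finset.range M, ∑ k ∈ Finset.range n,
            (⟪e k, (G (2^(j+1)) - G (2^j)) (e k)⟫ : ℂ)‖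
      ≤ ((∑ k ∈ Finset.range n, sv C k) + 1) + (2 * ‖C‖ + 1)
        + (8 * ‖C‖ + 16 * (∑ k ∈ Finset.range n, sv C k) + 16) := by
        refine (norm_add_le _ _).trans ?_
        refine add_le_add ((norm_add_le _ _).trans (add_le_add hA hB)) hCsum
    _ = (10 * ‖C‖ + 18) + 17 * ∑ k ∈ Finset.range n, sv C k := by ring

lemma tendsto_sum_mul_inv_rpow {a : ℕ → ℝ} (h0 : ∀ k, 0 ≤ a k) {P Q : ℝ}
    (hpq : Real.HolderConjugate P Q) (hsum : Summable fun k => a k ^ P) :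
    Tendsto (fun n : ℕ => (∑ k ∈ Finset.range n, a k) * (((n:ℝ) ^ (1/Q))⁻¹))
      atTop (𝓝 0) := by
  have hQpos : 0 < Q := hpq.symm.pos
  have hQinv : 0 < 1/Q := by positivity
  have hinv : Tendsto (fun n : ℕ => (((n:ℝ) ^ (1/Q))⁻¹)) atTop (𝓝 0) :=
    ((tendsto_rpow_atTop hQinv).comp tendsto_natCast_atTop_atTop).inv_tendsto_atTop
  rw [Metric.tendsto_atTop]
  intro ε hε
  set δ := ε/2 with hδdef
  have hδ : 0 < δ := by positivity
  have htail : Tendsto (fun N => ∑' k, a (k + N) ^ P) atTop (𝓝 0) :=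
    tendsto_sum_nat_add fun i => a i ^ P
  obtain ⟨N, hN⟩ : ∃ N, ∑' k, a (k + N) ^ P < δ ^ P :=
    ((htail.eventually (gt_mem_nhds (by positivity : (0:ℝ) < δ ^ P))).exists)
  have hIco : ∀ n, N ≤ n → ∑ k ∈ Finset.Ico N n, a k ≤ δ * (n:ℝ) ^ (1/Q) := by
    intro n hn
    have hHold := Real.inner_le_Lp_mul_Lq_of_nonneg (Finset.Ico N n)
      (f := a) (g := fun _ => (1:ℝ)) hpq (fun i _ => h0 i) (fun i _ => zero_le_one)
    simp only [mul_one, Real.one_rpow, Finset.sum_const, Nat.card_Ico,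
      nsmul_eq_mul, mul_one] at hHold
    have hb1 : ∑ k ∈ Finset.Ico N n, a k ^ P ≤ δ ^ P := by
      have heq : ∑ k ∈ Finset.Ico N n, a k ^ P =
          ∑ k ∈ Finset.range (n - N), a (N + k) ^ P := by
        rw [Finset.sum_Ico_eq_sum_range]
      have hle : ∑ k ∈ Finset.range (n - N), a (N + k) ^ P ≤ ∑' k, a (k + N) ^ P := by
        have hs : Summable fun k => a (k + N) ^ P := by
          have := (summable_nat_add_iff N).2 hsum
          exact this
        have := Summable.sum_le_tsum (Finset.range (n - N))
          (fun k _ => Real.rpow_nonneg (h0 _) P) hs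
        refine le_trans (le_of_eq ?_) this
        exact Finset.sum_congr rfl fun k _ => by rw [add_comm]
      linarith [heq ▸ hle, hN.le]
    have hb2 : (∑ k ∈ Finset.Ico N n, a k ^ P) ^ (1/P) ≤ δ := by
      rw [one_div]
      calc (∑ k ∈ Finset.Ico N n, a k ^ P) ^ P⁻¹ ≤ (δ ^ P) ^ P⁻¹ :=
            Real.rpow_le_rpow (Finset.sum_nonneg fun k _ => Real.rpow_nonneg (h0 _) P)
              hb1 (inv_nonneg.2 hpq.nonneg)
        _ = δ := Real.rpow_rpow_inv hδ.le hpq.ne_zero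
    have hb3 : ((n - N : ℕ) : ℝ) ^ (1/Q) ≤ ((n:ℝ)) ^ (1/Q) := by
      refine Real.rpow_le_rpow (by positivity) ?_ (by positivity)
      exact_mod_cast Nat.sub_le n N
    calc ∑ k ∈ Finset.Ico N n, a k
        ≤ (∑ k ∈ Finset.Ico N n, a k ^ P) ^ (1/P) * ((n - N : ℕ) : ℝ) ^ (1/Q) := hHold
      _ ≤ δ * ((n:ℝ)) ^ (1/Q) := by
          refine mul_le_mul hb2 hb3 (by positivity) hδ.le
  have hconst : Tendsto (fun n : ℕ =>
      (∑ k ∈ Finset.range N, a k) * (((n:ℝ) ^ (1/Q))⁻¹)) atTop (𝓝 0) := by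
    have := hinv.const_mul (∑ k ∈ Finset.range N, a k)
    simpa using this
  rw [Metric.tendsto_atTop] at hconst
  obtain ⟨N2, hN2⟩ := hconst δ hδ
  refine ⟨max (max N N2) 1, fun n hn => ?_⟩
  have hnN : N ≤ n := le_trans (le_trans (le_max_left _ _) (le_max_left _ _)) hn
  have hnN2 : N2 ≤ n := le_trans (le_trans (le_max_right _ _) (le_max_left _ _)) hn
  have hn1 : 1 ≤ n := le_trans (le_max_right _ _) hn
  have hrpos : (0:ℝ) < (n:ℝ) ^ (1/Q) := by
    refine Real.rpow_pos_of_pos ?_ _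
    exact_mod_cast hn1
  have hsplit : ∑ k ∈ Finset.range n, a k =
      (∑ k ∈ Finset.range N, a k) + ∑ k ∈ Finset.Ico N n, a k :=
    (Finset.sum_range_add_sum_Ico a hnN).symm
  have hf_nonneg : 0 ≤ (∑ k ∈ Finset.range n, a k) * (((n:ℝ) ^ (1/Q))⁻¹) := by
    refine mul_nonneg (Finset.sum_nonneg fun k _ => h0 k) (by positivity)
  rw [Real.dist_eq, sub_zero, abs_of_nonneg hf_nonneg]
  have h1 := hN2 n hnN2
  rw [Real.dist_eq, sub_zero] at h1
  have h1' : (∑ k ∈ Finset.range N, a k) * (((n:ℝ) ^ (1/Q))⁻¹) < δ :=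
    lt_of_abs_lt h1
  have h2 : (∑ k ∈ Finset.Ico N n, a k) * (((n:ℝ) ^ (1/Q))⁻¹) ≤ δ := by
    have := mul_le_mul_of_nonneg_right (hIco n hnN) (by positivity :
      (0:ℝ) ≤ (((n:ℝ) ^ (1/Q))⁻¹))
    rwa [mul_assoc, mul_inv_cancel₀ (ne_of_gt hrpos), mul_one] at this
  calc (∑ k ∈ Finset.range n, a k) * (((n:ℝ) ^ (1/Q))⁻¹)
      = (∑ k ∈ Finset.range N, a k) * (((n:ℝ) ^ (1/Q))⁻¹)
        + (∑ k ∈ Finset.Ico N n, a k) * (((n:ℝ) ^ (1/Q))⁻¹) := by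
        rw [hsplit, add_mul]
    _ < δ + δ := by linarith
    _ = ε := by rw [hδdef]; ring

/-- For `C` in the Schatten-`p` class with `p ∈ (1,∞]`, `q ∈ [1,∞)` conjugate, and any
orthonormal system `(e_n)`, one has `(1/n^{1/q}) ∑_{k=1}^n ⟨e_k, C e_k⟩ → 0`. -/

theorem stmt17 {H : Type u} [NormedAddCommGroup H] [InnerProductSpace ℂ H] [CompleteSpace H]
    [TopologicalSpace.SeparableSpace H] (hH : ¬ FiniteDimensional ℂ H)
    (p q : ℝ≥0∞) (hp : 1 < p) (hq : 1 ≤ q) (hq' : q ≠ ∞) (hpq : 1 / p + 1 / q = 1)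
    (C : H →L[ℂ] H) (hC : MemSchatten p C)
    (e : ℕ → H) (he : Orthonormal ℂ e) :
    Filter.Tendsto
      (fun n : ℕ => (((n : ℝ) ^ (1 / q.toReal))⁻¹ : ℝ) •
        ∑ k ∈ Finset.range n, (⟪e k, C (e k)⟫ : ℂ))
      Filter.atTop (nhds 0) := by
  obtain ⟨hcpt, hsummable⟩ := hC
  have hkey := key_bound C he
  by_cases hptop : p = ∞
  · -- q = 1, Cesàro case
    have hq1 : q = 1 := by
      rw [hptop] at hpq
      rw [ENNReal.div_top, zero_add, one_div] at hpq
      exact ENNReal.inv_eq_one.mp hpq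
    have hQ : q.toReal = 1 := by rw [hq1]; simp
    have hsv : Tendsto (sv C) atTop (𝓝 0) := sv_tendsto_zero C hcpt
    refine squeeze_zero_norm'
      (a := fun n : ℕ => (10 * ‖C‖ + 18) * ((n:ℝ))⁻¹
        + 17 * (((n:ℝ))⁻¹ * ∑ k ∈ Finset.range n, sv C k)) ?_ ?_
    · filter_upwards [Filter.eventually_ge_atTop 2] with n hn
      have hb := hkey n hn
      have hr : ((n : ℝ) ^ (1 / q.toReal)) = (n:ℝ) := by
        rw [hQ]; norm_num
      rw [norm_smul, hr, Real.norm_eq_abs, abs_of_nonneg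
        (by positivity : (0:ℝ) ≤ ((n:ℝ))⁻¹)]
      calc ((n:ℝ))⁻¹ * ‖∑ k ∈ Finset.range n, (⟪e k, C (e k)⟫ : ℂ)‖
          ≤ ((n:ℝ))⁻¹ * ((10 * ‖C‖ + 18) + 17 * ∑ k ∈ Finset.range n, sv C k) :=
            mul_le_mul_of_nonneg_left hb (by positivity)
        _ = (10 * ‖C‖ + 18) * ((n:ℝ))⁻¹
            + 17 * (((n:ℝ))⁻¹ * ∑ k ∈ Finset.range n, sv C k) := by ring
    · have T1 : Tendsto (fun n : ℕ => (10 * ‖C‖ + 18) * ((n:ℝ))⁻¹) atTop (𝓝 0) := by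
        have := tendsto_inv_atTop_nhds_zero_nat.const_mul (10 * ‖C‖ + 18)
        simpa using this
      have T2 : Tendsto (fun n : ℕ =>
          17 * (((n:ℝ))⁻¹ * ∑ k ∈ Finset.range n, sv C k)) atTop (𝓝 0) := by
        have := (hsv.cesaro).const_mul (17:ℝ)
        simpa using this
      simpa using T1.add T2
  · -- Hölder case
    have hp0 : p ≠ 0 := (zero_lt_one.trans hp).ne'
    have hq0 : q ≠ 0 := (zero_lt_one.trans_le hq).ne'
    have h1p : (1/p) ≠ ∞ := by rw [one_div]; exact ENNReal.inv_ne_top.2 hp0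
    have h1q : (1/q) ≠ ∞ := by rw [one_div]; exact ENNReal.inv_ne_top.2 hq0
    have hp1R : 1 < p.toReal := by
      have h := (ENNReal.toReal_lt_toReal (by simp : (1:ℝ≥0∞) ≠ ∞) hptop).2 hp
      simpa using h
    have hconj : (p.toReal).HolderConjugate (q.toReal) := by
      refine Real.holderConjugate_iff.mpr ⟨hp1R, ?_⟩
      have h := congrArg ENNReal.toReal hpq
      rw [ENNReal.toReal_add h1p h1q, one_div, one_div,
        ENNReal.toReal_inv, ENNReal.toReal_inv] at h
      simpa using h
    have hsum : Summable fun n => sv C n ^ p.toReal := hsummable hptop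
    have hmain := tendsto_sum_mul_inv_rpow (sv_nonneg C) hconj hsum
    have hQpos : 0 < 1 / q.toReal := by
      have := hconj.symm.pos
      positivity
    have hinvQ : Tendsto (fun n : ℕ => (((n:ℝ) ^ (1 / q.toReal))⁻¹)) atTop (𝓝 0) :=
      ((tendsto_rpow_atTop hQpos).comp tendsto_natCast_atTop_atTop).inv_tendsto_atTop
    refine squeeze_zero_norm'
      (a := fun n : ℕ => (10 * ‖C‖ + 18) * (((n:ℝ) ^ (1 / q.toReal))⁻¹)
        + 17 * ((∑ k ∈ Finset.range n, sv C k) * (((n:ℝ) ^ (1 / q.toReal))⁻¹))) ?_ ?_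
    · filter_upwards [Filter.eventually_ge_atTop 2] with n hn
      have hb := hkey n hn
      have hinv_nonneg : (0:ℝ) ≤ (((n:ℝ) ^ (1 / q.toReal))⁻¹) := by positivity
      rw [norm_smul, Real.norm_eq_abs, abs_of_nonneg hinv_nonneg]
      calc (((n:ℝ) ^ (1 / q.toReal))⁻¹) * ‖∑ k ∈ Finset.range n, (⟪e k, C (e k)⟫ : ℂ)‖
          ≤ (((n:ℝ) ^ (1 / q.toReal))⁻¹) *
              ((10 * ‖C‖ + 18) + 17 * ∑ k ∈ Finset.range n, sv C k) :=
            mul_le_mul_of_nonneg_left hb hinv_nonneg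
        _ = (10 * ‖C‖ + 18) * (((n:ℝ) ^ (1 / q.toReal))⁻¹)
            + 17 * ((∑ k ∈ Finset.range n, sv C k) * (((n:ℝ) ^ (1 / q.toReal))⁻¹)) := by
            ring
    · have T1 : Tendsto (fun n : ℕ =>
          (10 * ‖C‖ + 18) * (((n:ℝ) ^ (1 / q.toReal))⁻¹)) atTop (𝓝 0) := by
        have := hinvQ.const_mul (10 * ‖C‖ + 18)
        simpa using this
      have T2 := hmain.const_mul (17:ℝ)
      simp only [mul_zero] at T1 T2
      simpa using T1.add T2

end
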